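/- Let N ≥ 1 and let w : ℝ → ℝ be measurable with ∫ |λ|^j |w(λ)| dλ < ∞ for 0 ≤ j ≤ 2N−2, and set m_j := ∫ λ^j w(λ) dλ. Then (1/N!) ∫_{ℝ^N} Δ(λ_1,…,λ_N)^2 ∏_{k=1}^N w(λ_k) dλ = det( m_{i+j−2} )_{i,j=1,…,N}. (This evaluates the one-matrix model eigenvalue integral as a Hankel determinant of moments.) -/

import Mathlib

open MeasureTheory

/-- The Vandermonde product `Δ(l₁,…,l_N) = ∏_{j<i} (l_i − l_j)`. -/
noncomputable def vdm {N : ℕ} (l : Fin N → ℝ) : ℝ :=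
  ∏ i : Fin N, ∏ j ∈ Finset.Ioi i, (l j - l i)

theorem stmt2 (N : ℕ) (hN : 1 ≤ N) (w : ℝ → ℝ) (hw : Measurable w)
    (hint : ∀ j : ℕ, j ≤ 2 * N - 2 →
      Integrable (fun x : ℝ => |x| ^ j * |w x|))
    (m : ℕ → ℝ) (hm : ∀ j, m j = ∫ x : ℝ, x ^ j * w x) :
    (1 / (N.factorial : ℝ)) *
        ∫ lam : Fin N → ℝ, (vdm lam) ^ 2 * ∏ k : Fin N, w (lam k) =
      Matrix.det (Matrix.of fun i j : Fin N => m ((i : ℕ) + (j : ℕ))) := by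
  classical
  -- integrability of monomials against w
  have hmono : ∀ n : ℕ, n ≤ 2 * N - 2 → Integrable (fun x : ℝ => x ^ n * w x) := by
    intro n hn
    have hmeas : AEStronglyMeasurable (fun x : ℝ => x ^ n * w x) volume :=
      ((measurable_id.pow_const n).mul hw).aestronglyMeasurable
    refine (integrable_norm_iff hmeas).mp ?_
    have := hint n hn
    simpa [Real.norm_eq_abs, abs_mul, abs_pow] using this
  -- pointwise expansion of the integrand
  have key : ∀ lam : Fin N → ℝ,
      vdm lam ^ 2 * ∏ k : Fin N, w (lam k)
        = ∑ σ : Equiv.Perm (Fin N), ∑ τ : Equiv.Perm (Fin N),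
            (((Equiv.Perm.sign σ : ℤ) : ℝ) * ((Equiv.Perm.sign τ : ℤ) : ℝ)) *
              ∏ k : Fin N, (lam k ^ ((σ k : ℕ) + (τ k : ℕ)) * w (lam k)) := by
    intro lam
    have h1 : vdm lam = ∑ σ : Equiv.Perm (Fin N),
        ((Equiv.Perm.sign σ : ℤ) : ℝ) * ∏ i : Fin N, lam i ^ (σ i : ℕ) := by
      rw [vdm, ← Matrix.det_vandermonde, ← Matrix.det_transpose, Matrix.det_apply']
      simp [Matrix.vandermonde]
    rw [h1, sq, Finset.sum_mul_sum, Finset.sum_mul]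
    refine Finset.sum_congr rfl fun σ _ => ?_
    rw [Finset.sum_mul]
    refine Finset.sum_congr rfl fun τ _ => ?_
    have h2 : ∏ k : Fin N, (lam k ^ ((σ k : ℕ) + (τ k : ℕ)) * w (lam k))
        = ((∏ k : Fin N, lam k ^ (σ k : ℕ)) * ∏ k : Fin N, lam k ^ (τ k : ℕ)) *
            ∏ k : Fin N, w (lam k) := by
      rw [← Finset.prod_mul_distrib, ← Finset.prod_mul_distrib]
      exact Finset.prod_congr rfl fun k _ => by rw [pow_add]
    rw [h2]; ring
  -- integrability of each product term
  have hF : ∀ σ τ : Equiv.Perm (Fin N),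
      Integrable (fun lam : Fin N → ℝ =>
        ∏ k : Fin N, (lam k ^ ((σ k : ℕ) + (τ k : ℕ)) * w (lam k))) := by
    intro σ τ
    refine Integrable.fintype_prod (f := fun k x => x ^ ((σ k : ℕ) + (τ k : ℕ)) * w x) ?_
    intro k
    refine hmono _ ?_
    have h1 : (σ k : ℕ) < N := (σ k).is_lt
    have h2 : (τ k : ℕ) < N := (τ k).is_lt
    omega
  -- evaluate the integral
  have hI : (∫ lam : Fin N → ℝ, vdm lam ^ 2 * ∏ k : Fin N, w (lam k))
      = ∑ σ : Equiv.Perm (Fin N), ∑ τ : Equiv.Perm (Fin N),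
          (((Equiv.Perm.sign σ : ℤ) : ℝ) * ((Equiv.Perm.sign τ : ℤ) : ℝ)) *
            ∏ k : Fin N, m ((σ k : ℕ) + (τ k : ℕ)) := by
    simp_rw [key]
    rw [integral_finset_sum _ (fun σ _ =>
      integrable_finset_sum _ (fun τ _ => ((hF σ τ).const_mul _)))]
    refine Finset.sum_congr rfl fun σ _ => ?_
    rw [integral_finset_sum _ (fun τ _ => (hF σ τ).const_mul _)]
    refine Finset.sum_congr rfl fun τ _ => ?_
    rw [MeasureTheory.integral_const_mul,
      integral_fintype_prod_volume_eq_prod (ι := Fin N)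
        (fun k x => x ^ ((σ k : ℕ) + (τ k : ℕ)) * w x)]
    congr 1
    exact Finset.prod_congr rfl fun k _ => (hm _).symm
  -- the inner sum is a permuted determinant
  set M : Matrix (Fin N) (Fin N) ℝ := Matrix.of fun i j : Fin N => m ((i : ℕ) + (j : ℕ)) with hM
  have hdet : ∀ σ : Equiv.Perm (Fin N),
      (∑ τ : Equiv.Perm (Fin N), ((Equiv.Perm.sign τ : ℤ) : ℝ) *
          ∏ k : Fin N, m ((σ k : ℕ) + (τ k : ℕ)))
        = ((Equiv.Perm.sign σ : ℤ) : ℝ) * M.det := by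
    intro σ
    have h1 : (∑ τ : Equiv.Perm (Fin N), ((Equiv.Perm.sign τ : ℤ) : ℝ) *
          ∏ k : Fin N, m ((σ k : ℕ) + (τ k : ℕ)))
        = (M.submatrix σ id).det := by
      rw [← Matrix.det_transpose, Matrix.det_apply']
      refine Finset.sum_congr rfl fun τ _ => ?_
      congr 1
    have h2 := Matrix.det_permute σ M
    rw [h1, h2]
  have hsq : ∀ σ : Equiv.Perm (Fin N),
      ((Equiv.Perm.sign σ : ℤ) : ℝ) * ((Equiv.Perm.sign σ : ℤ) : ℝ) = 1 := by
    intro σ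
    rcases Int.units_eq_one_or (Equiv.Perm.sign σ) with h | h <;> simp [h]
  rw [hI]
  have hsum : (∑ σ : Equiv.Perm (Fin N), ∑ τ : Equiv.Perm (Fin N),
      (((Equiv.Perm.sign σ : ℤ) : ℝ) * ((Equiv.Perm.sign τ : ℤ) : ℝ)) *
        ∏ k : Fin N, m ((σ k : ℕ) + (τ k : ℕ)))
      = (N.factorial : ℝ) * M.det := by
    have : ∀ σ : Equiv.Perm (Fin N),
        (∑ τ : Equiv.Perm (Fin N),
          (((Equiv.Perm.sign σ : ℤ) : ℝ) * ((Equiv.Perm.sign τ : ℤ) : ℝ)) *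
            ∏ k : Fin N, m ((σ k : ℕ) + (τ k : ℕ))) = M.det := by
      intro σ
      have : (∑ τ : Equiv.Perm (Fin N),
          (((Equiv.Perm.sign σ : ℤ) : ℝ) * ((Equiv.Perm.sign τ : ℤ) : ℝ)) *
            ∏ k : Fin N, m ((σ k : ℕ) + (τ k : ℕ)))
          = ((Equiv.Perm.sign σ : ℤ) : ℝ) *
            (∑ τ : Equiv.Perm (Fin N), ((Equiv.Perm.sign τ : ℤ) : ℝ) *
              ∏ k : Fin N, m ((σ k : ℕ) + (τ k : ℕ))) := by
        rw [Finset.mul_sum]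
        exact Finset.sum_congr rfl fun τ _ => by ring
      rw [this, hdet σ, ← mul_assoc, hsq σ, one_mul]
    rw [Finset.sum_congr rfl fun σ _ => this σ, Finset.sum_const, Finset.card_univ,
      Fintype.card_perm, Fintype.card_fin, nsmul_eq_mul]
  rw [hsum, ← mul_assoc, one_div, inv_mul_cancel₀, one_mul]
  exact_mod_cast N.factorial_ne_zero
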